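/- Let G = (N, W) be a simple game satisfying monotonicity. If there exist w ∈ ℝ^N and q ∈ ℝ with Σ_{i∈S} w_i ≥ q for all S ∈ W, Σ_{i∈S} w_i ≤ q for all S ∉ W, and Σ_{i∈N} w_i > 0, then G is roughly weighted: the modified weights w''_i = max{w_i, 0} together with q form a rough voting representation. -/

import Mathlib

/-- A square real matrix has all entries in {0,1}. -/
def IsZeroOne {k : ℕ} (M : Matrix (Fin k) (Fin k) ℝ) : Prop :=
  ∀ i j, M i j = 0 ∨ M i j = 1

/-- `alpha k` is the maximum of `|det M|` over k×k 0–1 matrices. -/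
noncomputable def alpha (k : ℕ) : ℝ :=
  sSup {x : ℝ | ∃ M : Matrix (Fin k) (Fin k) ℝ, IsZeroOne M ∧ x = |M.det|}

/-- `(q; w)` is a rough voting representation of the simple game `W`:
`w` is nonnegative, `(q; w)` is not the zero vector, coalitions of weight
less than `q` are losing and coalitions of weight more than `q` are winning. -/
def IsRoughRep {n : ℕ} (W : Set (Finset (Fin n))) (q : ℝ) (w : Fin n → ℝ) : Prop :=
  (∀ i, 0 ≤ w i) ∧ (q ≠ 0 ∨ ∃ i, w i ≠ 0) ∧
  ∀ S : Finset (Fin n),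
    ((∑ i ∈ S, w i) < q → S ∉ W) ∧ (q < ∑ i ∈ S, w i → S ∈ W)

/-- A simple game is roughly weighted if it has a rough voting representation. -/
def RoughlyWeighted {n : ℕ} (W : Set (Finset (Fin n))) : Prop :=
  ∃ (q : ℝ) (w : Fin n → ℝ), IsRoughRep W q w

/-- `(X; Y)` is a trading transform: every player occurs equally often
among the `X`'s and among the `Y`'s. -/
def IsTradingTransform {n j : ℕ} (X Y : Fin j → Finset (Fin n)) : Prop :=
  ∀ p : Fin n,
    (Finset.univ.filter fun i => p ∈ X i).card =
    (Finset.univ.filter fun i => p ∈ Y i).card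

theorem stmt_17 {n : ℕ} (W : Set (Finset (Fin n)))
    (hmono : ∀ S S' : Finset (Fin n), S ∈ W → S ⊆ S' → S' ∈ W)
    (w : Fin n → ℝ) (q : ℝ)
    (hWin : ∀ S ∈ W, q ≤ ∑ i ∈ S, w i)
    (hLose : ∀ S : Finset (Fin n), S ∉ W → ∑ i ∈ S, w i ≤ q)
    (hpos : 0 < ∑ i : Fin n, w i) :
    IsRoughRep W q (fun i => max (w i) 0) := by
  refine ⟨fun i => le_max_right _ _, ?_, fun S => ⟨?_, ?_⟩⟩
  · right
    obtain ⟨i, hi⟩ := Finset.exists_lt_of_sum_lt (f := fun _ : Fin n => (0:ℝ)) (g := w)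
      (by simpa using hpos)
    exact ⟨i, by simp [max_eq_left hi.2.le]; linarith [hi.2]⟩
  · intro hlt hS
    have h1 : ∑ i ∈ S, w i ≤ ∑ i ∈ S, max (w i) 0 :=
      Finset.sum_le_sum fun i _ => le_max_left _ _
    exact absurd (hWin S hS) (by linarith)
  · intro hlt
    set T := S.filter (fun i => 0 ≤ w i) with hT
    have hsum : ∑ i ∈ T, w i = ∑ i ∈ S, max (w i) 0 := by
      rw [hT, Finset.sum_filter]
      exact Finset.sum_congr rfl fun i _ => by
        split <;> simp [max_eq_left, max_eq_right, *] <;> linarith [le_of_not_ge (by assumption : ¬ 0 ≤ w i)]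
    have hTW : T ∈ W := by
      by_contra hTW
      have := hLose T hTW
      rw [hsum] at this
      linarith
    exact hmono T S hTW (Finset.filter_subset _ _)
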